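/- (Proposition 2, symmetric case) Let d₁ = d₂ = d and let U be a unitary matrix indexed by Fin d × Fin d. Let S be the SWAP matrix on Fin d × Fin d, with entries S (a,b) (a',b') = 1 if a = b' and b = a' and 0 otherwise. With E(A) := 1 − (1/d⁴) · Tr((A ⊗ A) · T₁₃ · (A ⊗ A)ᴴ · T₁₃) for a matrix A indexed by Fin d × Fin d, one has E(S) = 1 − 1/d², and the entangling power satisfies e(U) = (d²/(d+1)²) · (E(U) + E(U·S) − E(S)). -/

import Mathlib

noncomputable section

open Matrix
open scoped Kronecker

/-- The swap `T₁₃` of subsystems 1 and 3 on the two-copy space. -/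
def T13 (d₁ d₂ : ℕ) :
    Matrix ((Fin d₁ × Fin d₂) × (Fin d₁ × Fin d₂)) ((Fin d₁ × Fin d₂) × (Fin d₁ × Fin d₂)) ℂ :=
  Matrix.of fun x y =>
    if x.1.1 = y.2.1 ∧ x.2.1 = y.1.1 ∧ x.1.2 = y.1.2 ∧ x.2.2 = y.2.2 then 1 else 0

/-- The swap `T₂₄` of subsystems 2 and 4 on the two-copy space. -/
def T24 (d₁ d₂ : ℕ) :
    Matrix ((Fin d₁ × Fin d₂) × (Fin d₁ × Fin d₂)) ((Fin d₁ × Fin d₂) × (Fin d₁ × Fin d₂)) ℂ :=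
  Matrix.of fun x y =>
    if x.1.2 = y.2.2 ∧ x.2.2 = y.1.2 ∧ x.1.1 = y.1.1 ∧ x.2.1 = y.2.1 then 1 else 0

/-- `P₁₃⁺ = (1 + T₁₃)/2`. -/
def P13p (d₁ d₂ : ℕ) := (2 : ℂ)⁻¹ • (1 + T13 d₁ d₂)

/-- `P₁₃⁻ = (1 − T₁₃)/2`. -/
def P13m (d₁ d₂ : ℕ) := (2 : ℂ)⁻¹ • (1 - T13 d₁ d₂)

/-- `P₂₄⁺ = (1 + T₂₄)/2`. -/
def P24p (d₁ d₂ : ℕ) := (2 : ℂ)⁻¹ • (1 + T24 d₁ d₂)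

/-- The entangling power
`e(U) = (8/(d₁(d₁+1)d₂(d₂+1))) · Tr((U⊗U) P₁₃⁺ P₂₄⁺ (U⊗U)ᴴ P₁₃⁻)`. -/
def ePow (d₁ d₂ : ℕ) (U : Matrix (Fin d₁ × Fin d₂) (Fin d₁ × Fin d₂) ℂ) : ℂ :=
  (8 / ((d₁ : ℂ) * ((d₁ : ℂ) + 1) * (d₂ : ℂ) * ((d₂ : ℂ) + 1))) *
    ((U ⊗ₖ U) * P13p d₁ d₂ * P24p d₁ d₂ * (U ⊗ₖ U)ᴴ * P13m d₁ d₂).trace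

/-- The SWAP matrix on `Fin d × Fin d`. -/
def Sw (d : ℕ) : Matrix (Fin d × Fin d) (Fin d × Fin d) ℂ :=
  Matrix.of fun x y => if x.1 = y.2 ∧ x.2 = y.1 then 1 else 0

/-! ### Auxiliary lemmas -/

section Aux

set_option linter.unusedSectionVars false

variable {I : Type*} [Fintype I] [DecidableEq I]

/-- permutation-like matrix -/
def PM (g : I ≃ I) : Matrix I I ℂ := Matrix.of fun x y => if y = g x then 1 else 0

lemma PM_mul (g : I ≃ I) (M : Matrix I I ℂ) : PM g * M = Matrix.of fun x z => M (g x) z := by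
  ext x z
  rw [Matrix.mul_apply]
  simp only [PM, Matrix.of_apply, ite_mul, one_mul, zero_mul]
  rw [Finset.sum_eq_single (g x) (fun b _ hb => if_neg hb) (by simp)]
  simp

lemma mul_PM (M : Matrix I I ℂ) (g : I ≃ I) : M * PM g = Matrix.of fun x z => M x (g.symm z) := by
  ext x z
  rw [Matrix.mul_apply]
  simp only [PM, Matrix.of_apply, mul_ite, mul_one, mul_zero]
  rw [Finset.sum_eq_single (g.symm z) (fun b _ hb => by
    rw [if_neg]; exact fun h => hb (by rw [h, Equiv.symm_apply_apply])) (by simp)]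
  simp

lemma PM_mul_PM (g h : I ≃ I) : PM g * PM h = PM (g.trans h) := by
  rw [PM_mul]; ext x z; simp [PM]; congr

lemma PM_refl : PM (Equiv.refl I) = (1 : Matrix I I ℂ) := by
  ext x y; simp [PM, Matrix.one_apply, eq_comm]

lemma PM_trace (g : I ≃ I) : (PM g).trace = ∑ x : I, if x = g x then (1:ℂ) else 0 := by
  simp [Matrix.trace, Matrix.diag, PM]

lemma kron_conjTranspose {m n p q : Type*} [Fintype m] [Fintype n]
    (A : Matrix m n ℂ) (B : Matrix p q ℂ) : (A ⊗ₖ B)ᴴ = Aᴴ ⊗ₖ Bᴴ := by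
  ext x y; simp [Matrix.conjTranspose_apply, Matrix.kroneckerMap_apply]

end Aux

section Perms

variable (d : ℕ)

/-- the permutation underlying `T13`. -/
def g13 : ((Fin d × Fin d) × (Fin d × Fin d)) ≃ ((Fin d × Fin d) × (Fin d × Fin d)) :=
  Function.Involutive.toPerm (fun x => ((x.2.1, x.1.2), (x.1.1, x.2.2))) (fun _ => rfl)

/-- the permutation underlying `T24`. -/
def g24 : ((Fin d × Fin d) × (Fin d × Fin d)) ≃ ((Fin d × Fin d) × (Fin d × Fin d)) :=
  Function.Involutive.toPerm (fun x => ((x.1.1, x.2.2), (x.2.1, x.1.2))) (fun _ => rfl)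

/-- the permutation underlying `Sw ⊗ Sw`. -/
def gS : ((Fin d × Fin d) × (Fin d × Fin d)) ≃ ((Fin d × Fin d) × (Fin d × Fin d)) :=
  Function.Involutive.toPerm (fun x => ((x.1.2, x.1.1), (x.2.2, x.2.1))) (fun _ => rfl)

/-- the big swap. -/
def gF : ((Fin d × Fin d) × (Fin d × Fin d)) ≃ ((Fin d × Fin d) × (Fin d × Fin d)) :=
  Function.Involutive.toPerm (fun x => (x.2, x.1)) (fun _ => rfl)

lemma T13_eq : T13 d d = PM (g13 d) := by
  ext x y
  simp only [T13, PM, Matrix.of_apply, g13, Function.Involutive.coe_toPerm]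
  refine if_congr ?_ rfl rfl
  rw [Prod.ext_iff, Prod.ext_iff, Prod.ext_iff]
  aesop

lemma T24_eq : T24 d d = PM (g24 d) := by
  ext x y
  simp only [T24, PM, Matrix.of_apply, g24, Function.Involutive.coe_toPerm]
  refine if_congr ?_ rfl rfl
  rw [Prod.ext_iff, Prod.ext_iff, Prod.ext_iff]
  aesop

lemma SS_eq : Sw d ⊗ₖ Sw d = PM (gS d) := by
  ext x y
  simp only [Matrix.kroneckerMap_apply, Sw, PM, Matrix.of_apply, gS, Function.Involutive.toPerm,
    Equiv.coe_fn_mk, Function.Involutive.coe_toPerm, ite_mul, one_mul, zero_mul, mul_ite, mul_one, mul_zero]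
  by_cases h1 : x.1.1 = y.1.2 ∧ x.1.2 = y.1.1 <;> by_cases h2 : x.2.1 = y.2.2 ∧ x.2.2 = y.2.1 <;>
    simp [h1, h2, Prod.ext_iff] <;> aesop

lemma Sw_hermitian : (Sw d)ᴴ = Sw d := by
  ext x y
  simp only [Matrix.conjTranspose_apply, Sw, Matrix.of_apply, apply_ite (star : ℂ → ℂ),
    star_one, star_zero]
  refine if_congr ?_ rfl rfl
  constructor <;> rintro ⟨h1, h2⟩ <;> exact ⟨h2.symm, h1.symm⟩

lemma e_g13_g13 : (g13 d).trans (g13 d) = Equiv.refl _ := Equiv.ext fun _ => rfl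
lemma e_conj : ((gS d).trans (g13 d)).trans (gS d) = g24 d := Equiv.ext fun _ => rfl
lemma e_conj' : (((gS d).trans (g13 d)).trans (gS d)).trans (g13 d) = gF d := Equiv.ext fun _ => rfl
lemma e_g13_g24 : (g13 d).trans (g24 d) = gF d := Equiv.ext fun _ => rfl

lemma cond_g13 (x : (Fin d × Fin d) × (Fin d × Fin d)) : (x = g13 d x) ↔ x.1.1 = x.2.1 := by
  constructor
  · intro h; exact congrArg (fun z => z.1.1) h
  · intro h
    show x = ((x.2.1, x.1.2), (x.1.1, x.2.2))
    rw [Prod.ext_iff, Prod.ext_iff, Prod.ext_iff]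
    exact ⟨⟨h, rfl⟩, ⟨h.symm, rfl⟩⟩

lemma cond_g24 (x : (Fin d × Fin d) × (Fin d × Fin d)) : (x = g24 d x) ↔ x.1.2 = x.2.2 := by
  constructor
  · intro h; exact congrArg (fun z => z.1.2) h
  · intro h
    show x = ((x.1.1, x.2.2), (x.2.1, x.1.2))
    rw [Prod.ext_iff, Prod.ext_iff, Prod.ext_iff]
    exact ⟨⟨rfl, h⟩, ⟨rfl, h.symm⟩⟩

lemma cond_gF (x : (Fin d × Fin d) × (Fin d × Fin d)) : (x = gF d x) ↔ x.1 = x.2 := by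
  constructor
  · intro h; exact congrArg (fun z => z.1) h
  · intro h
    show x = (x.2, x.1)
    rw [Prod.ext_iff]
    exact ⟨h, h.symm⟩

lemma trace_g13 : (PM (g13 d)).trace = (d:ℂ)^3 := by
  rw [PM_trace]
  simp only [cond_g13]
  rw [Fintype.sum_prod_type]
  dsimp only
  simp only [Fintype.sum_prod_type]
  simp [Finset.sum_ite_eq, apply_ite Finset.card]
  ring

lemma trace_g24 : (PM (g24 d)).trace = (d:ℂ)^3 := by
  rw [PM_trace]
  simp only [cond_g24]
  rw [Fintype.sum_prod_type]
  dsimp only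
  simp only [Fintype.sum_prod_type]
  simp [Finset.sum_ite_eq, apply_ite Finset.card]
  ring

lemma trace_gF : (PM (gF d)).trace = (d:ℂ)^2 := by
  rw [PM_trace]
  simp only [cond_gF]
  rw [Fintype.sum_prod_type]
  dsimp only
  simp only [Finset.sum_ite_eq, Finset.mem_univ, if_true, Finset.sum_const, Finset.card_univ,
    Fintype.card_prod, Fintype.card_fin, nsmul_eq_mul, mul_one]
  push_cast
  ring

lemma gF_comm (A B : Matrix (Fin d × Fin d) (Fin d × Fin d) ℂ) :
    PM (gF d) * (A ⊗ₖ B) = (B ⊗ₖ A) * PM (gF d) := by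
  rw [PM_mul, mul_PM]
  ext x z
  have hsymm : (gF d).symm = gF d := Function.Involutive.toPerm_symm _
  simp [hsymm, gF, Function.Involutive.toPerm, Function.Involutive.coe_toPerm, Matrix.kroneckerMap_apply, mul_comm]

end Perms

set_option maxHeartbeats 1000000

/-- (Proposition 2, symmetric case) With `E(A) = 1 − (1/d⁴)·Tr((A⊗A) T₁₃ (A⊗A)ᴴ T₁₃)`,
one has `E(S) = 1 − 1/d²` and `e(U) = (d²/(d+1)²)·(E(U) + E(U·S) − E(S))`. -/
theorem ePow_symmetric_case (d : ℕ) (hd : 0 < d)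
    (U : Matrix (Fin d × Fin d) (Fin d × Fin d) ℂ) (hU : Uᴴ * U = 1)
    (E : Matrix (Fin d × Fin d) (Fin d × Fin d) ℂ → ℂ)
    (hE : ∀ A : Matrix (Fin d × Fin d) (Fin d × Fin d) ℂ,
      E A = 1 - (1 / (d : ℂ) ^ 4) *
        ((A ⊗ₖ A) * T13 d d * (A ⊗ₖ A)ᴴ * T13 d d).trace) :
    E (Sw d) = 1 - 1 / (d : ℂ) ^ 2 ∧
    ePow d d U = ((d : ℂ) ^ 2 / ((d : ℂ) + 1) ^ 2) * (E U + E (U * Sw d) - E (Sw d)) := by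
  have hdC : (d : ℂ) ≠ 0 := Nat.cast_ne_zero.mpr hd.ne'
  have hdC1 : (d : ℂ) + 1 ≠ 0 := by
    have : ((d + 1 : ℕ) : ℂ) ≠ 0 := Nat.cast_ne_zero.mpr (Nat.succ_ne_zero d)
    push_cast at this; exact this
  -- Part 1 : E(Sw) = 1 - 1/d²
  have hESw : E (Sw d) = 1 - 1 / (d : ℂ) ^ 2 := by
    rw [hE]
    have key : (Sw d ⊗ₖ Sw d) * T13 d d * (Sw d ⊗ₖ Sw d)ᴴ * T13 d d = PM (gF d) := by
      rw [kron_conjTranspose, Sw_hermitian, SS_eq, T13_eq, PM_mul_PM, PM_mul_PM, PM_mul_PM,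
        e_conj']
    rw [key, trace_gF]
    field_simp
  refine ⟨hESw, ?_⟩
  set A := T13 d d with hA
  set B := T24 d d with hB
  set W := U ⊗ₖ U with hWdef
  set SS := Sw d ⊗ₖ Sw d with hSSdef
  set WS := (U * Sw d) ⊗ₖ (U * Sw d) with hWSdef
  have hW : Wᴴ * W = 1 := by
    rw [hWdef, kron_conjTranspose, ← Matrix.mul_kronecker_mul, hU, Matrix.one_kronecker_one]
  have hW' : W * Wᴴ = 1 := mul_eq_one_comm.mp hW
  have hSSH : SSᴴ = SS := by rw [hSSdef, kron_conjTranspose, Sw_hermitian]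
  have hWS : WS = W * SS := by rw [hWSdef, hWdef, hSSdef, Matrix.mul_kronecker_mul]
  have hWSH : WSᴴ = SS * Wᴴ := by rw [hWS, Matrix.conjTranspose_mul, hSSH]
  have hSAS : SS * A * SS = B := by
    rw [hSSdef, hA, hB, SS_eq, T13_eq, PM_mul_PM, PM_mul_PM, e_conj, T24_eq]
  set t1 : ℂ := (W * A * Wᴴ * A).trace with ht1
  set t2 : ℂ := (WS * A * WSᴴ * A).trace with ht2
  have hmid : W * B * Wᴴ = WS * A * WSᴴ := by
    rw [hWSH, hWS, ← hSAS]
    noncomm_ring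
  have hABW : W * (A * B) = (A * B) * W := by
    have h1 : A * B = PM (gF d) := by rw [hA, hB, T13_eq, T24_eq, PM_mul_PM, e_g13_g24]
    rw [h1, hWdef, gF_comm]
  have hAA : A * A = 1 := by rw [hA, T13_eq, PM_mul_PM, e_g13_g13, PM_refl]
  have htr1 : (1 : Matrix ((Fin d × Fin d) × (Fin d × Fin d)) _ ℂ).trace = (d:ℂ)^4 := by
    rw [Matrix.trace_one]
    simp [Fintype.card_prod, Fintype.card_fin]
    ring
  have htrA : A.trace = (d:ℂ)^3 := by rw [hA, T13_eq, trace_g13]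
  have htrB : B.trace = (d:ℂ)^3 := by rw [hB, T24_eq, trace_g24]
  have htrAB : (A * B).trace = (d:ℂ)^2 := by
    rw [hA, hB, T13_eq, T24_eq, PM_mul_PM, e_g13_g24, trace_gF]
  have hexp : W * P13p d d * P24p d d * Wᴴ * P13m d d
      = (8:ℂ)⁻¹ • (W * Wᴴ + W * A * Wᴴ + W * B * Wᴴ + W * (A * B) * Wᴴ
          - W * Wᴴ * A - W * A * Wᴴ * A - W * B * Wᴴ * A - W * (A * B) * Wᴴ * A) := by
    rw [P13p, P24p, P13m, ← hA, ← hB]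
    simp only [Matrix.mul_smul, Matrix.smul_mul, smul_smul]
    rw [show (2:ℂ)⁻¹ * (2⁻¹ * 2⁻¹) = (8:ℂ)⁻¹ by norm_num]
    congr 1
    noncomm_ring
  have c1 : (W * Wᴴ).trace = (d:ℂ)^4 := by rw [hW', htr1]
  have c2 : (W * A * Wᴴ).trace = (d:ℂ)^3 := by
    rw [Matrix.trace_mul_cycle, hW, one_mul, htrA]
  have c3 : (W * B * Wᴴ).trace = (d:ℂ)^3 := by
    rw [Matrix.trace_mul_cycle, hW, one_mul, htrB]
  have c4 : (W * (A * B) * Wᴴ).trace = (d:ℂ)^2 := by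
    rw [Matrix.trace_mul_cycle, hW, one_mul, htrAB]
  have c5 : (W * Wᴴ * A).trace = (d:ℂ)^3 := by rw [hW', one_mul, htrA]
  have c7 : (W * B * Wᴴ * A).trace = t2 := by rw [hmid, ht2]
  have c8 : (W * (A * B) * Wᴴ * A).trace = (d:ℂ)^3 := by
    rw [hABW, mul_assoc (A * B), hW', mul_one, Matrix.trace_mul_comm, ← mul_assoc, hAA,
      one_mul, htrB]
  have hEU : E U = 1 - (1/(d:ℂ)^4) * t1 := by rw [hE, ht1]
  have hEUS : E (U * Sw d) = 1 - (1/(d:ℂ)^4) * t2 := by rw [hE, ht2]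
  rw [ePow, ← hWdef, hexp, Matrix.trace_smul]
  simp only [Matrix.trace_sub, Matrix.trace_add]
  rw [c1, c2, c3, c4, c5, ← ht1, c7, c8, hEU, hEUS, hESw, smul_eq_mul]
  have hQ : (d:ℂ) * ((d:ℂ) + 1) * (d:ℂ) * ((d:ℂ) + 1) ≠ 0 :=
    mul_ne_zero (mul_ne_zero (mul_ne_zero hdC hdC1) hdC) hdC1
  field_simp
  ring
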